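/- Proposition 1 (relation between grey and integral-matching estimates, autonomous case): with equally spaced data of step h and u ≡ 0, the grey-model design matrix Y_g (rows [(y(t_{k−1})+y(t_k))ᵀ/2, 1]) and the integral-matching design matrix Y_m (rows [(y_lnt(t_k) − x(t_1))ᵀ, 1]) satisfy Y_m = Y_g Q with Q = [[I_d, 0], [((h−2)/2) x(t_1)ᵀ, 1]]; consequently, if Y_gᵀY_g is invertible, the least-squares estimates satisfy Â_m = Â_g and η̂_m = ĉ_g + Â_g x(t_1) − (h/2) Â_g x(t_1). -/

import Mathlib

open Matrix

theorem grey_vs_integral_matching_estimates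
    (n d : ℕ) (h : ℝ) (hpos : 0 < h)
    (x : ℕ → Fin d → ℝ)
    (y ylnt : ℕ → Fin d → ℝ)
    -- Cusum series with weights h₁ = 1 and hᵢ = h for i ≥ 2
    (hy1 : y 1 = x 1)
    (hyk : ∀ k, 2 ≤ k → y k = x 1 + ∑ i ∈ Finset.Icc 2 k, h • x i)
    -- trapezoid cumulative series
    (hl1 : ylnt 1 = x 1)
    (hlk : ∀ k, 2 ≤ k → ylnt k = x 1 + (h / 2) • ∑ i ∈ Finset.Icc 2 k, (x (i - 1) + x i))
    -- grey-model design matrix: k-th row [(y(t_{k+1}) + y(t_{k+2}))ᵀ/2, 1]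
    (Yg : Matrix (Fin (n - 1)) (Fin d ⊕ Unit) ℝ)
    (hYg : ∀ k i, Yg k (Sum.inl i) = (y (k.1 + 1) i + y (k.1 + 2) i) / 2)
    (hYg1 : ∀ k, Yg k (Sum.inr ()) = 1)
    -- integral-matching design matrix: k-th row [(y_lnt(t_{k+2}) − x(t_1))ᵀ, 1]
    (Ym : Matrix (Fin (n - 1)) (Fin d ⊕ Unit) ℝ)
    (hYm : ∀ k i, Ym k (Sum.inl i) = ylnt (k.1 + 2) i - x 1 i)
    (hYm1 : ∀ k, Ym k (Sum.inr ()) = 1)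
    -- transition matrix Q = [[I_d, 0], [((h−2)/2) x(t_1)ᵀ, 1]]
    (Q : Matrix (Fin d ⊕ Unit) (Fin d ⊕ Unit) ℝ)
    (hQ : Q = Matrix.fromBlocks 1 0 (Matrix.of fun _ j => ((h - 2) / 2) * x 1 j) 1)
    -- response matrix with rows x(t_{k+2})ᵀ
    (X : Matrix (Fin (n - 1)) (Fin d) ℝ)
    (hX : ∀ k i, X k i = x (k.1 + 2) i) :
    Ym = Yg * Q ∧
    (IsUnit (Ygᵀ * Yg).det →
      (∀ i j, ((Ymᵀ * Ym)⁻¹ * Ymᵀ * X) (Sum.inl j) i =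
        ((Ygᵀ * Yg)⁻¹ * Ygᵀ * X) (Sum.inl j) i) ∧
      (∀ i, ((Ymᵀ * Ym)⁻¹ * Ymᵀ * X) (Sum.inr ()) i =
        ((Ygᵀ * Yg)⁻¹ * Ygᵀ * X) (Sum.inr ()) i +
          (∑ j, ((Ygᵀ * Yg)⁻¹ * Ygᵀ * X) (Sum.inl j) i * x 1 j) -
          (h / 2) * ∑ j, ((Ygᵀ * Yg)⁻¹ * Ygᵀ * X) (Sum.inl j) i * x 1 j)) := by
  -- sum reindexing lemma
  have hsum1 : ∀ m : ℕ, 1 ≤ m → ∀ i : Fin d,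
      ∑ j ∈ Finset.Icc 2 (m+1), (x (j-1) i + x j i)
        = x 1 i + 2 * (∑ j ∈ Finset.Icc 2 m, x j i) + x (m+1) i := by
    intro m hm i
    rw [Finset.sum_add_distrib]
    have h1 : ∑ j ∈ Finset.Icc 2 (m+1), x (j-1) i = ∑ j ∈ Finset.Icc 1 m, x j i := by
      rw [show Finset.Icc 2 (m+1) = (Finset.Icc 1 m).image (· + 1) by
            rw [Finset.image_add_right_Icc]]
      rw [Finset.sum_image (by intro a _ b _ hab; simp only at hab; omega)]
      simp
    have h2 : ∑ j ∈ Finset.Icc 1 m, x j i = x 1 i + ∑ j ∈ Finset.Icc 2 m, x j i := by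
      rw [show Finset.Icc 1 m = insert 1 (Finset.Icc 2 m) by
            ext j; simp only [Finset.mem_Icc, Finset.mem_insert]; omega]
      rw [Finset.sum_insert (by simp)]
    have h3 : ∑ j ∈ Finset.Icc 2 (m+1), x j i
        = (∑ j ∈ Finset.Icc 2 m, x j i) + x (m+1) i := by
      rw [Finset.sum_Icc_succ_top (by omega)]
    rw [h1, h2, h3]; ring
  -- key pointwise identity
  have key : ∀ m : ℕ, 1 ≤ m → ∀ i,
      ylnt (m+1) i - x 1 i = (y m i + y (m+1) i)/2 + ((h-2)/2) * x 1 i := by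
    intro m hm i
    have hy2 := congrFun (hyk (m+1) (by omega)) i
    have hl2 := congrFun (hlk (m+1) (by omega)) i
    simp only [Pi.add_apply, Pi.smul_apply, smul_eq_mul, Finset.sum_apply] at hy2 hl2
    rw [← Finset.mul_sum] at hy2
    rcases Nat.lt_or_ge m 2 with hm2 | hm2
    · interval_cases m
      have hy1' := congrFun hy1 i
      rw [hl2, hy1', hy2, hsum1 1 le_rfl i]
      simp only [Finset.Icc_self, Finset.sum_singleton]
      rw [show (Finset.Icc 2 1 : Finset ℕ) = ∅ from rfl, Finset.sum_empty]
      ring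
    · have hym := congrFun (hyk m hm2) i
      simp only [Pi.add_apply, Pi.smul_apply, smul_eq_mul, Finset.sum_apply] at hym
      rw [← Finset.mul_sum] at hym
      rw [hl2, hym, hy2, hsum1 m hm i, Finset.sum_Icc_succ_top (by omega : 2 ≤ m+1)]
      ring
  -- part 1
  have hMQ : Ym = Yg * Q := by
    ext k c
    rw [Matrix.mul_apply, Fintype.sum_sum_type]
    cases c with
    | inl i =>
      simp only [hQ, Matrix.fromBlocks_apply₁₁, Matrix.fromBlocks_apply₂₁, Matrix.of_apply,
        Matrix.one_apply, mul_ite, mul_one, mul_zero, Finset.sum_ite_eq', Finset.mem_univ,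
        if_true, Fintype.sum_unique, hYg1, one_mul]
      rw [hYm, hYg]
      have := key (k.1 + 1) (by omega) i
      simpa using this
    | inr u =>
      cases u
      simp only [hQ, Matrix.fromBlocks_apply₁₂, Matrix.fromBlocks_apply₂₂, Matrix.zero_apply,
        mul_zero, Finset.sum_const_zero, Fintype.sum_unique, hYg1, hYm1, Matrix.one_apply_eq,
        mul_one, zero_add]
  refine ⟨hMQ, fun _ => ?_⟩
  -- inverse of Q
  set C : Matrix Unit (Fin d) ℝ := Matrix.of fun _ j => ((h - 2) / 2) * x 1 j with hC
  set Q' : Matrix (Fin d ⊕ Unit) (Fin d ⊕ Unit) ℝ := Matrix.fromBlocks 1 0 (-C) 1 with hQ'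
  have hQQ' : Q * Q' = 1 := by
    rw [hQ, hQ', Matrix.fromBlocks_multiply]
    simp [Matrix.fromBlocks_one]
  have hQ'Q : Q' * Q = 1 := by
    rw [hQ, hQ', Matrix.fromBlocks_multiply]
    simp [Matrix.fromBlocks_one]
  have hQinv : Q⁻¹ = Q' := Matrix.inv_eq_right_inv hQQ'
  have hQTinv : (Qᵀ)⁻¹ = Q'ᵀ := by
    refine Matrix.inv_eq_right_inv ?_
    rw [← Matrix.transpose_mul, hQ'Q, Matrix.transpose_one]
  have e1 : Ymᵀ * Ym = Qᵀ * (Ygᵀ * Yg) * Q := by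
    rw [hMQ, Matrix.transpose_mul]
    simp only [Matrix.mul_assoc]
  have e2 : (Ymᵀ * Ym)⁻¹ = Q' * ((Ygᵀ * Yg)⁻¹ * Q'ᵀ) := by
    rw [e1, Matrix.mul_inv_rev, Matrix.mul_inv_rev, hQinv, hQTinv]
  have hT : Q'ᵀ * Qᵀ = 1 := by
    rw [← Matrix.transpose_mul, hQQ', Matrix.transpose_one]
  have hB : (Ymᵀ * Ym)⁻¹ * Ymᵀ * X = Q' * ((Ygᵀ * Yg)⁻¹ * Ygᵀ * X) := by
    rw [e2, hMQ, Matrix.transpose_mul]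
    simp only [Matrix.mul_assoc]
    rw [← Matrix.mul_assoc Q'ᵀ Qᵀ, hT, Matrix.one_mul]
  set Bg := (Ygᵀ * Yg)⁻¹ * Ygᵀ * X with hBg
  constructor
  · intro i j
    rw [hB, Matrix.mul_apply, Fintype.sum_sum_type]
    simp [hQ', Matrix.one_apply, mul_ite, Finset.sum_ite_eq', Fintype.sum_unique]
  · intro i
    rw [hB, Matrix.mul_apply, Fintype.sum_sum_type]
    simp only [hQ', Matrix.fromBlocks_apply₂₁, Matrix.fromBlocks_apply₂₂, Matrix.neg_apply,
      Matrix.of_apply, Fintype.sum_unique, Matrix.one_apply_eq, one_mul, hC]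
    have hs : ∑ j, -(((h-2)/2) * x 1 j) * Bg (Sum.inl j) i
        = (∑ j, Bg (Sum.inl j) i * x 1 j) - (h/2) * ∑ j, Bg (Sum.inl j) i * x 1 j := by
      rw [Finset.mul_sum, ← Finset.sum_sub_distrib]
      exact Finset.sum_congr rfl (fun j _ => by ring)
    rw [hs]; ring
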